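/- For every σ > 0, every integer n ≥ 1 and every real λ ≥ 0: (λ² + n·σ²)/(λ+n)² ≥ σ²/(n+σ²), with equality if and only if λ = σ². In particular, the minimum over λ ≥ 0 of the no-skip-connection generative model's mean squared error (λ²+nσ²)/(λ+n)² is achieved at λ = σ² and equals the Bayes-optimal MSE σ²/(n+σ²); moreover n·(λ²+nσ²)/(λ+n)² → σ² as n → ∞, so this MSE decays as Θ(1/n). -/

import Mathlib

/-- The no-skip-connection MSE dominates the Bayes-optimal MSE, with equality iff
`λ = σ²`; moreover `n·(λ²+nσ²)/(λ+n)² → σ²`, so the MSE decays as `Θ(1/n)`. -/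
theorem stmt_18 (σ : ℝ) (hσ : 0 < σ) :
    (∀ (n : ℕ), 1 ≤ n → ∀ lam : ℝ, 0 ≤ lam →
      σ ^ 2 / (n + σ ^ 2) ≤ (lam ^ 2 + n * σ ^ 2) / (lam + n) ^ 2 ∧
      ((lam ^ 2 + n * σ ^ 2) / (lam + n) ^ 2 = σ ^ 2 / (n + σ ^ 2) ↔ lam = σ ^ 2)) ∧
    ∀ lam : ℝ, 0 ≤ lam →
      Filter.Tendsto
        (fun n : ℕ => (n : ℝ) * (lam ^ 2 + n * σ ^ 2) / (lam + n) ^ 2)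
        Filter.atTop (nhds (σ ^ 2)) := by
  constructor
  · intro n hn lam hlam
    have hn1 : (1:ℝ) ≤ n := by exact_mod_cast hn
    have hd1 : (0:ℝ) < (n:ℝ) + σ ^ 2 := by positivity
    have hd2 : (0:ℝ) < (lam + n) ^ 2 := by positivity
    constructor
    · rw [div_le_div_iff₀ hd1 hd2]
      nlinarith [sq_nonneg (lam - σ ^ 2)]
    · rw [div_eq_div_iff hd2.ne' hd1.ne']
      constructor
      · intro h
        have hsq : (n:ℝ) * (lam - σ ^ 2) ^ 2 = 0 := by nlinarith
        have hsq2 : (lam - σ ^ 2) ^ 2 = 0 := by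
          have hn0 : (0:ℝ) < n := by linarith
          nlinarith [sq_nonneg (lam - σ ^ 2)]
        have := pow_eq_zero_iff (two_ne_zero) |>.mp hsq2
        linarith [this]
      · intro h; rw [h]; ring
  · intro lam hlam
    have h0 : Filter.Tendsto (fun n : ℕ => (1:ℝ)/n) Filter.atTop (nhds 0) :=
      tendsto_one_div_atTop_nhds_zero_nat
    have hnum : Filter.Tendsto (fun n : ℕ => lam ^ 2 * (1/n) + σ ^ 2)
        Filter.atTop (nhds (σ ^ 2)) := by
      have := (h0.const_mul (lam ^ 2)).add_const (σ ^ 2)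
      simpa using this
    have hden : Filter.Tendsto (fun n : ℕ => (lam * (1/n) + 1) ^ 2)
        Filter.atTop (nhds 1) := by
      have := ((h0.const_mul lam).add_const 1).pow 2
      simpa using this
    have hq := hnum.div hden one_ne_zero
    rw [div_one] at hq
    apply hq.congr'
    filter_upwards [Filter.eventually_ge_atTop 1] with n hn
    have hn0 : (0:ℝ) < n := by exact_mod_cast hn
    have hln : lam + (n:ℝ) ≠ 0 := by positivity
    rw [Pi.div_apply]
    field_simp
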